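/- Let (α_i)_{i∈[1,N]} be roots constructed from a sequence of simple roots (β_i) by α_i = s_{β_1}···s_{β_{i-1}}(β_i). Then for i < j: ⟨β_i^∨, β_j⟩ = Σ_{k=1}^{j-i} (-1)^k Σ_{i = i_0 < i_1 < ··· < i_k = j} Π_{x=0}^{k-1} ⟨α_{i_x}^∨, α_{i_{x+1}}⟩. -/

import Mathlib

open RealInnerProductSpace

variable {V : Type*} [NormedAddCommGroup V] [InnerProductSpace ℝ V]

/-- The coroot pairing `⟨α^∨, x⟩ = 2 (α, x)/(α, α)`. -/
noncomputable def pairC (α x : V) : ℝ := 2 * ⟪α, x⟫ / ⟪α, α⟫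

/-- The reflection in the root `α`. -/
noncomputable def sref (α : V) (x : V) : V := x - pairC α x • α

/-- `wSeq β k = s_{β 0} ∘ ⋯ ∘ s_{β (k-1)}`. -/
noncomputable def wSeq (β : ℕ → V) : ℕ → V → V
  | 0 => id
  | k + 1 => wSeq β k ∘ sref (β k)

/-- `alphaSeq β k = s_{β 0} ⋯ s_{β (k-1)} (β k)`; in the 1-indexed notation of the paper,
`α_k = s_{β_1} ⋯ s_{β_{k-1}} (β_k)`. -/
noncomputable def alphaSeq (β : ℕ → V) (k : ℕ) : V := wSeq β k (β k)

/-- `wSeqRev β k = s_{β (k-1)} ∘ ⋯ ∘ s_{β 0}`, the word read in the opposite order. -/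
noncomputable def wSeqRev (β : ℕ → V) : ℕ → V → V
  | 0 => id
  | k + 1 => sref (β k) ∘ wSeqRev β k

open scoped Classical in
/-- The alternating sum `∑_{k=1}^{j-i} (-1)^k ∑_{i = i₀ < i₁ < ⋯ < i_k = j}
∏_{x=0}^{k-1} ⟨α_{i_x}^∨, α_{i_{x+1}}⟩`, where the inner sum runs over all strictly
increasing chains from `i` to `j`. -/
noncomputable def chainSum (α : ℕ → V) (i j : ℕ) : ℝ :=
  ∑ k ∈ Finset.Icc 1 (j - i), (-1 : ℝ) ^ k *
    ∑ c ∈ Finset.univ.filter (fun c : Fin (k + 1) → Fin (j + 1) =>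
        StrictMono c ∧ (c 0 : ℕ) = i ∧ (c (Fin.last k) : ℕ) = j),
      ∏ x : Fin k, pairC (α (c x.castSucc)) (α (c x.succ))

/-- Let `β 0, …, β (N-1)` be simple roots of a root system `Φ` and
`α_k = s_{β_1} ⋯ s_{β_{k-1}}(β_k)`.  Then for `i < j < N`:
`⟨β_i^∨, β_j⟩ = ∑_{k=1}^{j-i} (-1)^k ∑_{i = i₀ < ⋯ < i_k = j} ∏_x ⟨α_{i_x}^∨, α_{i_{x+1}}⟩`. -/
lemma sref_zero (x : V) : sref (0 : V) x = x := by
  simp [sref, pairC]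

lemma pairC_self {a : V} (ha : a ≠ 0) : pairC a a = 2 := by
  have : ⟪a, a⟫ ≠ 0 := by
    simpa using (inner_self_ne_zero (𝕜 := ℝ)).2 ha
  rw [pairC, mul_div_assoc, div_self this, mul_one]

lemma pairC_sub_smul (a x y : V) (r : ℝ) :
    pairC a (x - r • y) = pairC a x - r * pairC a y := by
  simp [pairC, inner_sub_right, real_inner_smul_right]
  ring

lemma inner_sref (a x y : V) : ⟪sref a x, sref a y⟫ = ⟪x, y⟫ := by
  by_cases ha : a = 0
  · simp [ha, sref_zero]
  · have h0 : ⟪a, a⟫ ≠ 0 := by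
      simpa using (inner_self_ne_zero (𝕜 := ℝ)).2 ha
    simp only [sref, pairC, inner_sub_left, inner_sub_right,
      real_inner_smul_left, real_inner_smul_right]
    rw [real_inner_comm x a]
    field_simp
    ring

lemma sref_sub (a x y : V) : sref a (x - y) = sref a x - sref a y := by
  simp only [sref, pairC, inner_sub_right]
  rw [show (2 * (⟪a,x⟫ - ⟪a,y⟫) / ⟪a,a⟫) = 2*⟪a,x⟫/⟪a,a⟫ - 2*⟪a,y⟫/⟪a,a⟫ by ring]
  module

lemma sref_smul (a : V) (r : ℝ) (x : V) : sref a (r • x) = r • sref a x := by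
  simp only [sref, pairC, real_inner_smul_right]
  rw [show (2 * (r * ⟪a,x⟫) / ⟪a,a⟫) = r * (2*⟪a,x⟫/⟪a,a⟫) by ring]
  module

lemma sref_sref {a : V} (ha : a ≠ 0) (x : V) : sref a (sref a x) = x := by
  have h : pairC a (sref a x) = -pairC a x := by
    rw [sref, pairC_sub_smul, pairC_self ha]; ring
  rw [sref, h, sref]; module

lemma pairC_sref_self {a : V} (ha : a ≠ 0) (x : V) :
    pairC a (sref a x) = -pairC a x := by
  rw [sref, pairC_sub_smul, pairC_self ha]; ring

lemma inner_wSeq (β : ℕ → V) (k : ℕ) (x y : V) :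
    ⟪wSeq β k x, wSeq β k y⟫ = ⟪x, y⟫ := by
  induction k generalizing x y with
  | zero => simp [wSeq]
  | succ k ih => simp only [wSeq, Function.comp_apply]; rw [ih, inner_sref]

lemma wSeq_sub (β : ℕ → V) (k : ℕ) (x y : V) :
    wSeq β k (x - y) = wSeq β k x - wSeq β k y := by
  induction k generalizing x y with
  | zero => simp [wSeq]
  | succ k ih => simp only [wSeq, Function.comp_apply, sref_sub, ih]

lemma wSeq_smul (β : ℕ → V) (k : ℕ) (r : ℝ) (x : V) :
    wSeq β k (r • x) = r • wSeq β k x := by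
  induction k generalizing x with
  | zero => simp [wSeq]
  | succ k ih => simp only [wSeq, Function.comp_apply, sref_smul, ih]

lemma pairC_wSeq (β : ℕ → V) (k : ℕ) (x y : V) :
    pairC (wSeq β k x) (wSeq β k y) = pairC x y := by
  simp only [pairC, inner_wSeq]

lemma alphaSeq_ne_zero (β : ℕ → V) (k : ℕ) (h : β k ≠ 0) : alphaSeq β k ≠ 0 := by
  intro h0
  apply h
  have := inner_wSeq β k (β k) (β k)
  rw [show wSeq β k (β k) = alphaSeq β k from rfl, h0] at this
  simp only [inner_zero_left] at this
  exact (inner_self_eq_zero (𝕜 := ℝ)).1 this.symm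

lemma wSeq_succ_eq (β : ℕ → V) (k : ℕ) (x : V) :
    wSeq β (k + 1) x = sref (alphaSeq β k) (wSeq β k x) := by
  have : wSeq β (k+1) x = wSeq β k (x - pairC (β k) x • β k) := rfl
  rw [this, wSeq_sub, wSeq_smul, sref, alphaSeq,
    pairC_wSeq β k (β k) x]

noncomputable def Tchain (α : ℕ → V) (j : ℕ) : ℕ → V
  | 0 => α j
  | d + 1 => sref (α (j - (d + 1))) (Tchain α j d)

lemma wSeq_eq_Tchain (β : ℕ → V) (j : ℕ) (hβ : ∀ m, m < j → β m ≠ 0) :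
    ∀ d, d ≤ j → wSeq β (j - d) (β j) = Tchain (alphaSeq β) j d := by
  intro d
  induction d with
  | zero => intro _; simp [Tchain, alphaSeq]
  | succ d ih =>
    intro hd
    have hd' : d ≤ j := Nat.le_of_succ_le hd
    have hm : j - (d + 1) + 1 = j - d := by omega
    have h1 : wSeq β (j - d) (β j)
        = sref (alphaSeq β (j - (d+1))) (wSeq β (j - (d+1)) (β j)) := by
      rw [← hm, wSeq_succ_eq]
    rw [Tchain, ← ih hd', h1, sref_sref (alphaSeq_ne_zero β _ (hβ _ (by omega)))]

lemma pairC_Tchain_expand (α : ℕ → V) (j : ℕ) (b : V) :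
    ∀ d, pairC b (Tchain α j d) = pairC b (α j)
      - ∑ e ∈ Finset.range d,
          pairC (α (j - (e+1))) (Tchain α j e) * pairC b (α (j - (e+1))) := by
  intro d
  induction d with
  | zero => simp [Tchain]
  | succ d ih =>
    rw [Tchain, sref, pairC_sub_smul, ih, Finset.sum_range_succ]
    ring

open scoped Classical in
noncomputable def Sgen (q : ℕ → ℕ → ℝ) (k i j : ℕ) : ℝ :=
  ∑ c ∈ Finset.univ.filter (fun c : Fin (k + 1) → Fin (j + 1) =>
      StrictMono c ∧ (c 0 : ℕ) = i ∧ (c (Fin.last k) : ℕ) = j),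
    ∏ x : Fin k, q (c x.castSucc) (c x.succ)

noncomputable def Cgen (q : ℕ → ℕ → ℝ) (i j : ℕ) : ℝ :=
  ∑ k ∈ Finset.Icc 1 (j - i), (-1 : ℝ) ^ k * Sgen q k i j

-- strict mono gap lemma
lemma strictMono_fin_gap {n m : ℕ} (c : Fin (n + 1) → Fin (m + 1)) (hc : StrictMono c) :
    (c 0 : ℕ) + n ≤ (c (Fin.last n) : ℕ) := by
  induction n with
  | zero => simp
  | succ n ih =>
    have h1 : ((c ∘ Fin.castSucc) 0 : ℕ) + n ≤ ((c ∘ Fin.castSucc) (Fin.last n) : ℕ) :=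
      ih (c ∘ Fin.castSucc) (hc.comp Fin.strictMono_castSucc)
    have h2 : ((Fin.last n).castSucc : Fin (n+2)) < Fin.last (n+1) := by
      rw [Fin.lt_iff_val_lt_val]; simp
    have h3 := hc h2
    simp only [Function.comp_apply, Fin.castSucc_zero] at h1
    have := Fin.lt_iff_val_lt_val.1 h3
    omega

lemma Sgen_eq_zero (q : ℕ → ℕ → ℝ) {k i j : ℕ} (h : j < i + k) : Sgen q k i j = 0 := by
  classical
  rw [Sgen]
  rw [Finset.filter_congr_decidable]
  convert Finset.sum_empty
  rw [Finset.filter_eq_empty_iff]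
  rintro c - ⟨hmono, h0, hl⟩
  have := strictMono_fin_gap c hmono
  omega

lemma Sgen_one (q : ℕ → ℕ → ℝ) {i j : ℕ} (hij : i < j) : Sgen q 1 i j = q i j := by
  classical
  have hi : i < j + 1 := by omega
  set c₀ : Fin 2 → Fin (j + 1) := ![⟨i, hi⟩, Fin.last j] with hc₀
  have hP : StrictMono c₀ ∧ (c₀ 0 : ℕ) = i ∧ (c₀ (Fin.last 1) : ℕ) = j := by
    refine ⟨?_, by simp [hc₀], by simp [hc₀, Fin.last]⟩
    rw [Fin.strictMono_iff_lt_succ]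
    intro x
    fin_cases x
    simp [hc₀, Fin.lt_def, Fin.last]
    omega
  rw [Sgen, Finset.filter_congr_decidable, Finset.sum_filter]
  rw [Finset.sum_eq_single_of_mem c₀ (Finset.mem_univ _)]
  · rw [if_pos hP]
    simp [hc₀, Fin.last]
  · intro b _ hb
    rw [if_neg]
    rintro ⟨hmono, h0, hl⟩
    apply hb
    funext x
    fin_cases x
    · exact Fin.ext (by simpa [hc₀] using h0)
    · exact Fin.ext (by simpa [hc₀, Fin.last] using hl)

lemma chain_split (q : ℕ → ℕ → ℝ) (i j k : ℕ) :
    Sgen q (k + 2) i j = ∑ m ∈ Finset.Ioo i j, q i m * Sgen q (k + 1) m j := by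
  classical
  simp only [Sgen, Finset.filter_congr_decidable, Finset.mul_sum]
  rw [Finset.sum_sigma']
  refine (Finset.sum_nbij'
    (i := fun c : Fin (k + 3) → Fin (j + 1) =>
      (⟨(c 1 : ℕ), fun x : Fin (k + 2) => c x.succ⟩ :
        Σ _m : ℕ, Fin (k + 2) → Fin (j + 1)))
    (j := fun p : Σ _m : ℕ, Fin (k + 2) → Fin (j + 1) =>
      Fin.cons ⟨i % (j + 1), Nat.mod_lt _ (Nat.succ_pos j)⟩ p.2)
    ?_ ?_ ?_ ?_ ?_)
  · -- hi : maps into sigma set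
    rintro c hc
    rw [Finset.mem_filter] at hc
    obtain ⟨-, hmono, h0, hl⟩ := hc
    have h01 : (0 : Fin (k + 3)) < 1 := by simp [Fin.lt_def]
    have h1l : (1 : Fin (k + 3)) < Fin.last (k + 2) := by simp [Fin.lt_def, Fin.last]
    have hi1 : i < (c 1 : ℕ) := by
      have := hmono h01; rw [Fin.lt_def] at this; omega
    have hj1 : (c 1 : ℕ) < j := by
      have := hmono h1l; rw [Fin.lt_def] at this; omega
    rw [Finset.mem_sigma, Finset.mem_Ioo, Finset.mem_filter]
    refine ⟨⟨hi1, hj1⟩, Finset.mem_univ _, hmono.comp Fin.strictMono_succ, ?_, ?_⟩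
    · dsimp only
      rw [← Fin.succ_zero_eq_one]
    · dsimp only
      rw [Fin.succ_last]
      exact hl
  · -- hj : maps back into filter
    rintro ⟨m, c⟩ hp
    rw [Finset.mem_sigma, Finset.mem_Ioo, Finset.mem_filter] at hp
    obtain ⟨⟨him, hmj⟩, -, hmono, h0, hl⟩ := hp
    dsimp only at him hmj hmono h0 hl ⊢
    have hij : i < j + 1 := by omega
    have hmod : i % (j + 1) = i := Nat.mod_eq_of_lt hij
    rw [Finset.mem_filter]
    refine ⟨Finset.mem_univ _, ?_, ?_, ?_⟩
    · rw [Fin.strictMono_iff_lt_succ]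
      intro x
      induction x using Fin.cases with
      | zero =>
        rw [Fin.castSucc_zero, Fin.cons_zero, Fin.cons_succ, Fin.lt_def]
        dsimp only
        omega
      | succ y =>
        rw [← Fin.succ_castSucc, Fin.cons_succ, Fin.cons_succ]
        exact hmono (Fin.castSucc_lt_succ : y.castSucc < y.succ)
    · rw [Fin.cons_zero]
      dsimp only
      omega
    · rw [show Fin.last (k + 2) = Fin.succ (Fin.last (k + 1)) from (Fin.succ_last _).symm,
        Fin.cons_succ]
      exact hl
  · -- left_inv
    intro c hc
    rw [Finset.mem_filter] at hc
    obtain ⟨-, hmono, h0, hl⟩ := hc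
    dsimp only
    funext x
    induction x using Fin.cases with
    | zero =>
      rw [Fin.cons_zero]
      refine Fin.ext ?_
      dsimp only
      have : i < j + 1 := (h0 ▸ (c 0).isLt)
      rw [Nat.mod_eq_of_lt this, ← h0]
    | succ y => rw [Fin.cons_succ]
  · -- right_inv
    rintro ⟨m, c⟩ hp
    rw [Finset.mem_sigma, Finset.mem_Ioo, Finset.mem_filter] at hp
    obtain ⟨⟨him, hmj⟩, -, hmono, h0, hl⟩ := hp
    dsimp only at him hmj hmono h0 hl ⊢
    refine Sigma.ext ?_ (heq_of_eq ?_)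
    · dsimp only
      rw [← Fin.succ_zero_eq_one, Fin.cons_succ, h0]
    · dsimp only
      funext x
      rw [Fin.cons_succ]
  · -- values
    intro c hc
    rw [Finset.mem_filter] at hc
    obtain ⟨-, hmono, h0, hl⟩ := hc
    dsimp only
    rw [Fin.prod_univ_succ, Fin.castSucc_zero, h0, ← Fin.succ_zero_eq_one]
    congr 1

noncomputable def Dgen (q : ℕ → ℕ → ℝ) (m j : ℕ) : ℝ :=
  ∑ e ∈ Finset.range (j - m), (-1 : ℝ) ^ e * Sgen q (e + 1) m j

lemma Cgen_eq_neg_Dgen (q : ℕ → ℕ → ℝ) (m j : ℕ) : Cgen q m j = -Dgen q m j := by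
  rw [Cgen, Dgen, show Finset.Icc 1 (j - m) = Finset.Ico 1 (j - m + 1) by
    rw [Finset.Ico_add_one_right_eq_Icc], Finset.sum_Ico_eq_sum_range]
  rw [show j - m + 1 - 1 = j - m from rfl, ← Finset.sum_neg_distrib]
  refine Finset.sum_congr rfl fun e _ => ?_
  rw [show 1 + e = e + 1 by ring, pow_succ]
  ring

lemma Dgen_extend (q : ℕ → ℕ → ℝ) {m j n : ℕ} (h : j - m ≤ n) :
    Dgen q m j = ∑ e ∈ Finset.range n, (-1 : ℝ) ^ e * Sgen q (e + 1) m j := by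
  rw [Dgen]
  refine Finset.sum_subset (Finset.range_subset_range.2 h) fun e _ he => ?_
  rw [Finset.mem_range, not_lt] at he
  rw [Sgen_eq_zero q (by omega), mul_zero]

lemma Cgen_rec (q : ℕ → ℕ → ℝ) {i j : ℕ} (hij : i < j) :
    Cgen q i j = -(q i j) - ∑ m ∈ Finset.Ioo i j, q i m * Cgen q m j := by
  rw [Cgen, show Finset.Icc 1 (j - i) = Finset.Ico 1 (j - i + 1) by rw [Finset.Ico_add_one_right_eq_Icc],
    Finset.sum_Ico_eq_sum_range, show j - i + 1 - 1 = (j - i - 1) + 1 by omega,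
    Finset.sum_range_succ']
  have hf1 : (-1 : ℝ) ^ (1 + 0) * Sgen q (1 + 0) i j = -(q i j) := by
    rw [Sgen_one q hij]; ring
  rw [hf1]
  have hsum : ∑ e ∈ Finset.range (j - i - 1), (-1 : ℝ) ^ (1 + (e + 1)) * Sgen q (1 + (e + 1)) i j
      = -∑ m ∈ Finset.Ioo i j, q i m * Cgen q m j := by
    have step : ∀ e ∈ Finset.range (j - i - 1),
        (-1 : ℝ) ^ (1 + (e + 1)) * Sgen q (1 + (e + 1)) i j
        = ∑ m ∈ Finset.Ioo i j, (-1 : ℝ) ^ e * (q i m * Sgen q (e + 1) m j) := by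
      intro e _
      rw [show 1 + (e + 1) = e + 2 by ring, chain_split q i j e, Finset.mul_sum]
      refine Finset.sum_congr rfl fun m _ => ?_
      rw [pow_add]
      ring
    rw [Finset.sum_congr rfl step, Finset.sum_comm]
    rw [← Finset.sum_neg_distrib]
    refine Finset.sum_congr rfl fun m hm => ?_
    rw [Finset.mem_Ioo] at hm
    have : Dgen q m j = ∑ e ∈ Finset.range (j - i - 1), (-1 : ℝ) ^ e * Sgen q (e + 1) m j :=
      Dgen_extend q (by omega)
    rw [Cgen_eq_neg_Dgen, this, mul_neg, neg_neg, Finset.mul_sum]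
    refine Finset.sum_congr rfl fun e _ => ?_
    ring
  rw [hsum]
  ring

lemma main_ind (β : ℕ → V) (j : ℕ) :
    ∀ d i, i < j → j - i ≤ d →
      pairC (alphaSeq β i) (Tchain (alphaSeq β) j (j - (i + 1)))
        = -Cgen (fun a b => pairC (alphaSeq β a) (alphaSeq β b)) i j := by
  intro d
  induction d with
  | zero => intro i h1 h2; omega
  | succ d ih =>
    intro i hij hd
    set α := alphaSeq β with hα
    set q : ℕ → ℕ → ℝ := fun a b => pairC (α a) (α b) with hq
    rw [pairC_Tchain_expand α j (α i) (j - (i + 1))]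
    have hre : ∑ e ∈ Finset.range (j - (i + 1)),
          pairC (α (j - (e + 1))) (Tchain α j e) * pairC (α i) (α (j - (e + 1)))
        = ∑ m ∈ Finset.Ioo i j, -Cgen q m j * q i m := by
      refine Finset.sum_nbij' (i := fun e => j - (e + 1)) (j := fun m => j - (m + 1))
        ?_ ?_ ?_ ?_ ?_
      · intro e he; rw [Finset.mem_range] at he; rw [Finset.mem_Ioo]; omega
      · intro m hm; rw [Finset.mem_Ioo] at hm; rw [Finset.mem_range]; omega
      · intro e he; rw [Finset.mem_range] at he; omega
      · intro m hm; rw [Finset.mem_Ioo] at hm; omega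
      · intro e he
        rw [Finset.mem_range] at he
        have hkey : pairC (α (j - (e + 1))) (Tchain α j (j - ((j - (e + 1)) + 1)))
            = -Cgen q (j - (e + 1)) j := ih (j - (e + 1)) (by omega) (by omega)
        rw [show j - ((j - (e + 1)) + 1) = e by omega] at hkey
        rw [hkey]
    rw [hre, Cgen_rec q hij]
    have hswap : ∑ m ∈ Finset.Ioo i j, -Cgen q m j * q i m
        = -∑ m ∈ Finset.Ioo i j, q i m * Cgen q m j := by
      rw [← Finset.sum_neg_distrib]
      exact Finset.sum_congr rfl fun m _ => by ring
    rw [hswap]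
    show q i j - -∑ m ∈ Finset.Ioo i j, q i m * Cgen q m j
      = -(-q i j - ∑ m ∈ Finset.Ioo i j, q i m * Cgen q m j)
    ring

lemma chainSum_eq_Cgen (α : ℕ → V) (i j : ℕ) :
    chainSum α i j = Cgen (fun a b => pairC (α a) (α b)) i j := rfl

theorem beta_pairing_as_alternating_chain_sum
    (Φ : Set V) (hne : ∀ α ∈ Φ, α ≠ 0) (hrefl : ∀ α ∈ Φ, ∀ γ ∈ Φ, sref α γ ∈ Φ)
    (N : ℕ) (β : ℕ → V) (hβ : ∀ i, i < N → β i ∈ Φ) :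
    ∀ i j, i < j → j < N → pairC (β i) (β j) = chainSum (alphaSeq β) i j := by
  intro i j hij hjN
  set α := alphaSeq β with hα
  have hβnz : ∀ m, m < j → β m ≠ 0 := fun m hm => hne _ (hβ m (by omega))
  have h1 : pairC (β i) (β j) = pairC (α i) (wSeq β i (β j)) := by
    rw [hα, alphaSeq, pairC_wSeq]
  have h2 : wSeq β i (β j) = Tchain α j (j - i) := by
    have := wSeq_eq_Tchain β j hβnz (j - i) (by omega)
    rwa [show j - (j - i) = i by omega] at this
  have h3 : Tchain α j (j - i) = sref (α i) (Tchain α j (j - (i + 1))) := by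
    rw [show j - i = (j - (i + 1)) + 1 by omega, Tchain,
      show j - ((j - (i + 1)) + 1) = i by omega]
  have hαnz : α i ≠ 0 := alphaSeq_ne_zero β i (hβnz i hij)
  rw [h1, h2, h3, pairC_sref_self hαnz, main_ind β j (j - i) i hij le_rfl,
    neg_neg, chainSum_eq_Cgen]
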